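/- Let A be a DG R-algebra, Q a graded-projective DG A-module, and N a DG A-module. The map Ψ: YExt^1_A(Q, N) → H_{−1}(Hom_A(Q, N)), sending the class of a graded-split extension with differential [[∂^N, λ],[0, ∂^Q]] to the homology class of the cycle λ, is a well-defined isomorphism of abelian groups, where YExt^1 carries the Baer sum. -/

import Mathlib

open Function

/-- A chain complex of `R`-modules, indexed homologically over `ℤ`. -/
structure Cx (R : Type) [CommRing R] where
  X : ℤ → Type
  [acg : ∀ i, AddCommGroup (X i)]
  [mod : ∀ i, Module R (X i)]
  d : ∀ i, X i →ₗ[R] X (i - 1)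
  d_sq : ∀ i x, d (i - 1) (d i x) = 0

attribute [instance] Cx.acg Cx.mod

variable {R : Type} [CommRing R]

/-- Transport along an equality of degrees. -/
def Cx.cst (M : Cx R) {i j : ℤ} (h : i = j) : M.X i →ₗ[R] M.X j where
  toFun x := congrArg M.X h ▸ x
  map_add' := by subst h; intro x y; rfl
  map_smul' := by subst h; intro r x; rfl

/-- A positively graded, graded commutative DG `R`-algebra. -/
structure DGAlg (R : Type) [CommRing R] extends Cx R where
  one : toCx.X 0
  mul : ∀ {i j : ℤ}, toCx.X i → toCx.X j → toCx.X (i + j)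
  pos : ∀ i : ℤ, i < 0 → Subsingleton (toCx.X i)
  mul_add : ∀ {i j} (a : toCx.X i) (b c : toCx.X j), mul a (b + c) = mul a b + mul a c
  add_mul : ∀ {i j} (a b : toCx.X i) (c : toCx.X j), mul (a + b) c = mul a c + mul b c
  smul_mul : ∀ {i j} (r : R) (a : toCx.X i) (b : toCx.X j), mul (r • a) b = r • mul a b
  mul_smul : ∀ {i j} (r : R) (a : toCx.X i) (b : toCx.X j), mul a (r • b) = r • mul a b
  one_mul : ∀ {i} (a : toCx.X i), toCx.cst (zero_add i) (mul one a) = a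
  mul_one : ∀ {i} (a : toCx.X i), toCx.cst (add_zero i) (mul a one) = a
  mul_assoc : ∀ {i j k} (a : toCx.X i) (b : toCx.X j) (c : toCx.X k),
    toCx.cst (add_assoc i j k) (mul (mul a b) c) = mul a (mul b c)
  mul_comm : ∀ {i j} (a : toCx.X i) (b : toCx.X j),
    mul a b = ((i * j).negOnePow : ℤ) • toCx.cst (add_comm j i) (mul b a)
  leibniz : ∀ {i j} (a : toCx.X i) (b : toCx.X j),
    toCx.d (i + j) (mul a b) =
      toCx.cst (by omega) (mul (toCx.d i a) b) +
      (i.negOnePow : ℤ) • toCx.cst (by omega) (mul a (toCx.d j b))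

/-- A DG module over a DG `R`-algebra `A`. -/
structure DGMod (R : Type) [CommRing R] (A : DGAlg R) extends Cx R where
  smul : ∀ {i j : ℤ}, A.X i → toCx.X j → toCx.X (i + j)
  smul_add : ∀ {i j} (a : A.X i) (m m' : toCx.X j), smul a (m + m') = smul a m + smul a m'
  add_smul : ∀ {i j} (a a' : A.X i) (m : toCx.X j), smul (a + a') m = smul a m + smul a' m
  smul_rsmul : ∀ {i j} (r : R) (a : A.X i) (m : toCx.X j), smul (r • a) m = r • smul a m
  rsmul_smul : ∀ {i j} (r : R) (a : A.X i) (m : toCx.X j), smul a (r • m) = r • smul a m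
  one_smul : ∀ {j} (m : toCx.X j), toCx.cst (zero_add j) (smul A.one m) = m
  mul_smul : ∀ {i j k} (a : A.X i) (b : A.X j) (m : toCx.X k),
    toCx.cst (add_assoc i j k) (smul (A.mul a b) m) = smul a (smul b m)
  leibniz : ∀ {i j} (a : A.X i) (m : toCx.X j),
    toCx.d (i + j) (smul a m) =
      toCx.cst (by omega) (smul (A.d i a) m) +
      (i.negOnePow : ℤ) • toCx.cst (by omega) (smul a (toCx.d j m))

namespace DGMod

variable {A : DGAlg R}

lemma smul_zero' (M : DGMod R A) {i j : ℤ} (a : A.X i) :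
    M.smul a (0 : M.X j) = 0 := by
  have h := M.smul_add a (0 : M.X j) 0
  rw [add_zero] at h
  exact (left_eq_add.mp h)

/-- scalar multiplication by `a ∈ A_i`, as an `R`-linear map -/
def smulL (M : DGMod R A) {i j : ℤ} (a : A.X i) : M.X j →ₗ[R] M.X (i + j) where
  toFun m := M.smul a m
  map_add' := M.smul_add a
  map_smul' r m := M.rsmul_smul r a m

end DGMod

variable {A : DGAlg R}

/-- A morphism of DG `A`-modules. -/
structure DGHom (M N : DGMod R A) where
  f : ∀ i, M.X i →ₗ[R] N.X i
  comm_d : ∀ i m, f (i - 1) (M.d i m) = N.d i (f i m)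
  comm_smul : ∀ {i j} (a : A.X i) (m : M.X j), f (i + j) (M.smul a m) = N.smul a (f j m)

namespace DGHom

variable {M N P : DGMod R A}

def comp (g : DGHom N P) (h : DGHom M N) : DGHom M P where
  f i := (g.f i).comp (h.f i)
  comm_d i m := by simp [h.comm_d, g.comm_d]
  comm_smul {i j} a m := by simp [h.comm_smul, g.comm_smul]

instance : Zero (DGHom M N) :=
  ⟨{ f := fun _ => 0
     comm_d := by intro i m; simp
     comm_smul := by intro i j a m; simp [N.smul_zero'] }⟩

instance : Add (DGHom M N) :=
  ⟨fun g h =>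
    { f := fun i => g.f i + h.f i
      comm_d := by intro i m; simp [g.comm_d, h.comm_d]
      comm_smul := by intro i j a m; simp [g.comm_smul, h.comm_smul, N.smul_add] }⟩

instance : Neg (DGHom M N) :=
  ⟨fun g =>
    { f := fun i => -g.f i
      comm_d := by intro i m; simp [g.comm_d]
      comm_smul := by
        intro i j a m
        have h0 := N.smul_add a (g.f j m) (-g.f j m)
        rw [add_neg_cancel, N.smul_zero'] at h0
        simp only [LinearMap.neg_apply, g.comm_smul]
        exact neg_eq_of_add_eq_zero_right h0.symm }⟩

instance : Sub (DGHom M N) := ⟨fun g h => g + -h⟩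

end DGHom

/-- A graded `A`-linear map of degree `0` (not necessarily a chain map). -/
structure GH0 (M N : DGMod R A) where
  f : ∀ i, M.X i →ₗ[R] N.X i
  comm_smul : ∀ {i j} (a : A.X i) (m : M.X j), f (i + j) (M.smul a m) = N.smul a (f j m)

/-- A graded `A`-linear map of degree `-1` (with the Koszul sign rule). -/
structure GHneg (M N : DGMod R A) where
  f : ∀ i, M.X i →ₗ[R] N.X (i - 1)
  comm_smul : ∀ {i j} (a : A.X i) (m : M.X j),
    f (i + j) (M.smul a m) = (i.negOnePow : ℤ) • N.cst (by omega) (N.smul a (f j m))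

/-- A graded `A`-linear map of degree `n` (with the Koszul sign rule):
the degree `n` component of the Hom complex `Hom_A(M,N)`. -/
structure GHn (M N : DGMod R A) (n : ℤ) where
  f : ∀ i, M.X i →ₗ[R] N.X (i + n)
  comm_smul : ∀ {i j} (a : A.X i) (m : M.X j),
    f (i + j) (M.smul a m) = ((i * n).negOnePow : ℤ) • N.cst (by omega) (N.smul a (f j m))

namespace GHneg

variable {M N : DGMod R A}

instance : Zero (GHneg M N) :=
  ⟨{ f := fun _ => 0
     comm_smul := by intro i j a m; simp [N.smul_zero'] }⟩

instance : Add (GHneg M N) :=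
  ⟨fun g h =>
    { f := fun i => g.f i + h.f i
      comm_smul := by
        intro i j a m
        simp only [LinearMap.add_apply, g.comm_smul, h.comm_smul, ← smul_add, ← map_add,
          N.smul_add] }⟩

instance : Neg (GHneg M N) :=
  ⟨fun g =>
    { f := fun i => -g.f i
      comm_smul := by
        intro i j a m
        have h0 := N.smul_add a (g.f j m) (-(g.f j m))
        rw [add_neg_cancel, N.smul_zero'] at h0
        have h1 : N.smul a (-(g.f j m)) = -N.smul a (g.f j m) :=
          (neg_eq_of_add_eq_zero_right h0.symm).symm
        simp only [LinearMap.neg_apply, g.comm_smul, h1, map_neg, smul_neg] }⟩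

instance : Sub (GHneg M N) := ⟨fun g h => g + -h⟩

/-- `λ` is a cycle of degree `-1` in `Hom_A(M,N)`: `∂^N ∘ λ + λ ∘ ∂^M = 0`. -/
def isCycle (l : GHneg M N) : Prop :=
  ∀ i m, N.d (i - 1) (l.f i m) + l.f (i - 1) (M.d i m) = 0

/-- `λ` is a boundary of degree `-1` in `Hom_A(M,N)`:
`λ = ∂^N ∘ v − v ∘ ∂^M` for a degree `0` graded `A`-linear map `v`. -/
def isBdry (l : GHneg M N) : Prop :=
  ∃ v : GH0 M N, ∀ i m, l.f i m = N.d i (v.f i m) - v.f (i - 1) (M.d i m)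

end GHneg

namespace GHn

variable {M N : DGMod R A} {n : ℤ}

instance : Zero (GHn M N n) :=
  ⟨{ f := fun _ => 0
     comm_smul := by intro i j a m; simp [N.smul_zero'] }⟩

instance : Add (GHn M N n) :=
  ⟨fun g h =>
    { f := fun i => g.f i + h.f i
      comm_smul := by
        intro i j a m
        simp only [LinearMap.add_apply, g.comm_smul, h.comm_smul, ← smul_add, ← map_add,
          N.smul_add] }⟩

instance : Neg (GHn M N n) :=
  ⟨fun g =>
    { f := fun i => -g.f i
      comm_smul := by
        intro i j a m
        have h0 := N.smul_add a (g.f j m) (-(g.f j m))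
        rw [add_neg_cancel, N.smul_zero'] at h0
        have h1 : N.smul a (-(g.f j m)) = -N.smul a (g.f j m) :=
          (neg_eq_of_add_eq_zero_right h0.symm).symm
        simp only [LinearMap.neg_apply, g.comm_smul, h1, map_neg, smul_neg] }⟩

instance : Sub (GHn M N n) := ⟨fun g h => g + -h⟩

/-- the cycle condition in degree `n` of the Hom complex: `∂^N ∘ f = (−1)^n f ∘ ∂^M` -/
def isCycle (l : GHn M N n) : Prop :=
  ∀ i m, N.d (i + n) (l.f i m) = (n.negOnePow : ℤ) • N.cst (by omega) (l.f (i - 1) (M.d i m))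

/-- the boundary condition in degree `n` of the Hom complex -/
def isBdry (l : GHn M N n) : Prop :=
  ∃ v : GHn M N (n + 1), ∀ i m,
    l.f i m = N.cst (by omega) (N.d (i + (n + 1)) (v.f i m)) -
      ((n + 1).negOnePow : ℤ) • N.cst (by omega) (v.f (i - 1) (M.d i m))

end GHn

lemma DGHom.f_cst {M N : DGMod R A} (p : DGHom M N) {u v : ℤ} (h : u = v) (x : M.X u) :
    p.f v (M.cst h x) = N.cst h (p.f u x) := by subst h; rfl

namespace GHn

/-- postcomposition with a morphism, on degree `n` graded maps -/
def map {Q M N : DGMod R A} (p : DGHom M N) (l : GHn Q M n) : GHn Q N n where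
  f i := (p.f (i + n)).comp (l.f i)
  comm_smul := by
    intro i j a m
    show p.f (i + j + n) (l.f (i + j) _) = _
    rw [l.comm_smul a m, map_zsmul, DGHom.f_cst, p.comm_smul]
    rfl

end GHn

/-- A short exact sequence (extension) of DG `A`-modules `0 → N → E → Q → 0`. -/
structure DGExt (Q N : DGMod R A) where
  E : DGMod R A
  ι : DGHom N E
  p : DGHom E Q
  inj : ∀ i, Injective (ι.f i)
  surj : ∀ i, Surjective (p.f i)
  exact : ∀ i, LinearMap.range (ι.f i) = LinearMap.ker (p.f i)

namespace DGExt

variable {Q N : DGMod R A}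

/-- an extension splits if the inclusion admits a retraction which is a morphism
of DG `A`-modules -/
def Splits (e : DGExt Q N) : Prop :=
  ∃ h : DGHom e.E N, ∀ i x, h.f i (e.ι.f i x) = x

/-- an extension is graded-split if there are degree `0` graded `A`-linear maps
`h, k` with `h∘ι = id`, `p∘k = id`, `h∘k = 0` and `ι∘h + k∘p = id` -/
def GradedSplit (e : DGExt Q N) : Prop :=
  ∃ (h : GH0 e.E N) (k : GH0 Q e.E),
    (∀ i x, h.f i (e.ι.f i x) = x) ∧
    (∀ i q, e.p.f i (k.f i q) = q) ∧
    (∀ i q, h.f i (k.f i q) = 0) ∧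
    (∀ i x, e.ι.f i (h.f i x) + k.f i (e.p.f i x) = x)

/-- Yoneda equivalence of extensions: an isomorphism of DG `A`-modules compatible with
the identity maps on `N` and `Q` -/
def Equiv' (e e' : DGExt Q N) : Prop :=
  ∃ φ : DGHom e.E e'.E, (∀ i, Bijective (φ.f i)) ∧
    (∀ i x, φ.f i (e.ι.f i x) = e'.ι.f i x) ∧
    (∀ i x, e'.p.f i (φ.f i x) = e.p.f i x)

end DGExt

/-- `Q` is graded-projective: `Hom_A(Q,−)` preserves surjectivity of morphisms. -/
def GradedProjective (Q : DGMod R A) : Prop :=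
  ∀ (M N : DGMod R A) (p : DGHom M N), (∀ i, Surjective (p.f i)) →
    ∀ (n : ℤ) (g : GHn Q N n), ∃ h : GHn Q M n, ∀ i m, p.f (i + n) (h.f i m) = g.f i m

/-- `P` is categorically projective: a projective object of the abelian category of
DG `A`-modules. -/
def CatProjective (P : DGMod R A) : Prop :=
  ∀ (M N : DGMod R A) (p : DGHom M N), (∀ i, Surjective (p.f i)) →
    ∀ g : DGHom P N, ∃ h : DGHom P M, ∀ i x, p.f i (h.f i x) = g.f i x

/-- `M` is acyclic (homologically trivial). -/
def AcyclicD (M : DGMod R A) : Prop :=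
  ∀ i x, M.d i x = 0 → ∃ y, x = M.cst (by omega) (M.d (i + 1) y)

/-- Elementwise formulation of "`p` induces isomorphisms on all homology groups". -/
def QuasiIsoD {M N : DGMod R A} (p : DGHom M N) : Prop :=
  ∀ i, (∀ z, N.d i z = 0 → ∃ x, M.d i x = 0 ∧
        ∃ w, z - p.f i x = N.cst (by omega) (N.d (i + 1) w)) ∧
    (∀ x, M.d i x = 0 → (∃ w, p.f i x = N.cst (by omega) (N.d (i + 1) w)) →
        ∃ v, x = M.cst (by omega) (M.d (i + 1) v))

/-- `Q` is semi-projective: it is graded-projective and `Hom_A(Q,−)` sends surjective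
quasiisomorphisms to surjective quasiisomorphisms. -/
def SemiProjective (Q : DGMod R A) : Prop :=
  GradedProjective Q ∧
  ∀ (M N : DGMod R A) (p : DGHom M N), (∀ i, Surjective (p.f i)) → QuasiIsoD p →
    ((∀ (n : ℤ) (g : GHn Q N n), ∃ h : GHn Q M n, ∀ i m, (GHn.map p h).f i m = g.f i m) ∧
     (∀ n : ℤ,
        (∀ g : GHn Q N n, g.isCycle →
          ∃ h : GHn Q M n, h.isCycle ∧ (g - GHn.map p h).isBdry) ∧
        (∀ h : GHn Q M n, h.isCycle → (GHn.map p h).isBdry → h.isBdry)))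

/-- the underlying complex of `N ⊕_λ Q` -/
def twistCx (N Q : DGMod R A) (l : GHneg Q N) (hc : l.isCycle) : Cx R where
  X i := N.X i × Q.X i
  acg i := inferInstance
  mod i := inferInstance
  d i := LinearMap.prod
    ((N.d i).comp (LinearMap.fst _ _ _) + (l.f i).comp (LinearMap.snd _ _ _))
    ((Q.d i).comp (LinearMap.snd _ _ _))
  d_sq := by
    intro i x
    have h := hc i x.2
    simp only [LinearMap.prod_apply, LinearMap.add_apply, LinearMap.coe_comp, comp_apply,
      LinearMap.fst_apply, LinearMap.snd_apply, Pi.prod]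
    rw [Prod.ext_iff]
    constructor
    · show (N.d (i-1)) ((N.d i) x.1 + (l.f i) x.2) + (l.f (i - 1)) ((Q.d i) x.2) = 0
      rw [map_add, N.d_sq, zero_add, h]
    · exact Q.d_sq i x.2

lemma twistCx_cst (N Q : DGMod R A) (l : GHneg Q N) (hc : l.isCycle) {u v : ℤ} (h : u = v)
    (x : N.X u × Q.X u) :
    (twistCx N Q l hc).cst h x = (N.cst h x.1, Q.cst h x.2) := by subst h; rfl

/-- The DG module `N ⊕_λ Q`: underlying graded module `N ⊕ Q`, with differential
`[[∂^N, λ],[0, ∂^Q]]`, attached to a degree `-1` cycle `λ ∈ Hom_A(Q,N)_{-1}`. -/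
def stdMod (N Q : DGMod R A) (l : GHneg Q N) (hc : l.isCycle) : DGMod R A where
  toCx := twistCx N Q l hc
  smul {i j} a m := (N.smul a m.1, Q.smul a m.2)
  smul_add := by
    intro i j a m m'
    refine Prod.ext ?_ ?_
    · show N.smul a (m.1 + m'.1) = N.smul a m.1 + N.smul a m'.1
      exact N.smul_add a m.1 m'.1
    · show Q.smul a (m.2 + m'.2) = Q.smul a m.2 + Q.smul a m'.2
      exact Q.smul_add a m.2 m'.2
  add_smul := by
    intro i j a a' m
    refine Prod.ext ?_ ?_
    · exact N.add_smul a a' m.1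
    · exact Q.add_smul a a' m.2
  smul_rsmul := by
    intro i j r a m
    refine Prod.ext ?_ ?_
    · exact N.smul_rsmul r a m.1
    · exact Q.smul_rsmul r a m.2
  rsmul_smul := by
    intro i j r a m
    refine Prod.ext ?_ ?_
    · show N.smul a (r • m.1) = r • N.smul a m.1
      exact N.rsmul_smul r a m.1
    · show Q.smul a (r • m.2) = r • Q.smul a m.2
      exact Q.rsmul_smul r a m.2
  one_smul := by
    intro j m
    rw [twistCx_cst]
    exact Prod.ext (N.one_smul m.1) (Q.one_smul m.2)
  mul_smul := by
    intro i j k a b m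
    rw [twistCx_cst]
    exact Prod.ext (N.mul_smul a b m.1) (Q.mul_smul a b m.2)
  leibniz := by
    intro i j a m
    rw [twistCx_cst, twistCx_cst]
    simp only [LinearMap.prod_apply, LinearMap.add_apply, LinearMap.coe_comp, comp_apply,
      LinearMap.fst_apply, LinearMap.snd_apply, Pi.prod, Prod.smul_def, Prod.mk_add_mk]
    refine Prod.ext ?_ ?_
    · show N.d (i + j) (N.smul a m.1) + l.f (i + j) (Q.smul a m.2) =
        N.cst _ (N.smul (A.d i a) m.1) +
          (i.negOnePow : ℤ) • N.cst _ (N.smul a (N.d j m.1 + l.f j m.2))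
      rw [N.leibniz, l.comm_smul, N.smul_add, map_add, smul_add]
      abel
    · show Q.d (i + j) (Q.smul a m.2) =
        Q.cst _ (Q.smul (A.d i a) m.2) + (i.negOnePow : ℤ) • Q.cst _ (Q.smul a (Q.d j m.2))
      rw [Q.leibniz]

/-- The graded-split extension `0 → N → N ⊕_λ Q → Q → 0` attached to a cycle `λ`. -/
def stdExt (N Q : DGMod R A) (l : GHneg Q N) (hc : l.isCycle) : DGExt Q N where
  E := stdMod N Q l hc
  ι := { f := fun i => LinearMap.inl _ _ _
         comm_d := by
           intro i m
           refine Prod.ext ?_ ?_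
           · show N.d i m = N.d i m + l.f i 0
             rw [map_zero, add_zero]
           · show (0 : Q.X (i - 1)) = Q.d i 0
             rw [map_zero]
         comm_smul := by
           intro i j a m
           refine Prod.ext ?_ ?_
           · rfl
           · exact (Q.smul_zero' a).symm }
  p := { f := fun i => LinearMap.snd _ _ _
         comm_d := by intro i m; rfl
         comm_smul := by intro i j a m; rfl }
  inj := fun i => LinearMap.inl_injective
  surj := fun i => LinearMap.snd_surjective
  exact := fun i => LinearMap.range_inl _ _ _

/-- `t` is a Baer sum of `e` and `e'`: it is obtained from the pullback `e.E ×_Q e'.E`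
by dividing out the antidiagonal copy of `N` (image of `x ↦ (−x, x)`). -/
def IsBaerSum {Q N : DGMod R A} (e e' t : DGExt Q N) : Prop :=
  ∃ (P : DGMod R A) (p1 : DGHom P e.E) (p2 : DGHom P e'.E) (γ : DGHom N P)
      (τ : DGHom P t.E),
    -- `P` is the pullback of `e.p` and `e'.p`:
    (∀ i x, e.p.f i (p1.f i x) = e'.p.f i (p2.f i x)) ∧
    (∀ i, Injective fun x : P.X i => (p1.f i x, p2.f i x)) ∧
    (∀ (i : ℤ) (u : e.E.X i) (v : e'.E.X i), e.p.f i u = e'.p.f i v →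
      ∃ x : P.X i, p1.f i x = u ∧ p2.f i x = v) ∧
    -- `γ` is the antidiagonal embedding of `N` into the pullback:
    (∀ i x, p1.f i (γ.f i x) = -(e.ι.f i x)) ∧
    (∀ i x, p2.f i (γ.f i x) = e'.ι.f i x) ∧
    -- `τ` realizes `t.E` as the quotient of the pullback by the antidiagonal `N`:
    (∀ i, Surjective (τ.f i)) ∧
    (∀ i, LinearMap.range (γ.f i) = LinearMap.ker (τ.f i)) ∧
    -- compatibility with the structure maps of `t`:
    (∀ (i : ℤ) (n : N.X i) (x : P.X i),
      p1.f i x = e.ι.f i n → p2.f i x = 0 → τ.f i x = t.ι.f i n) ∧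
    (∀ i x, t.p.f i (τ.f i x) = e.p.f i (p1.f i x))

lemma GHneg.isCycle_add {R : Type} [CommRing R] {A : DGAlg R} {N Q : DGMod R A}
    {l l' : GHneg Q N} (hc : l.isCycle) (hc' : l'.isCycle) : (l + l').isCycle := by
  intro i m
  have h1 := hc i m
  have h2 := hc' i m
  show N.d (i - 1) (l.f i m + l'.f i m) +
    ((l.f (i - 1)) ((Q.d i) m) + (l'.f (i - 1)) ((Q.d i) m)) = 0
  rw [map_add]
  have h3 : ((N.d (i - 1)) ((l.f i) m) + (l.f (i - 1)) ((Q.d i) m)) +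
      ((N.d (i - 1)) ((l'.f i) m) + (l'.f (i - 1)) ((Q.d i) m)) = 0 := by
    rw [h1, h2, add_zero]
  rw [← h3]
  abel

section Statement6

variable {R : Type} [CommRing R] {A : DGAlg R} (N Q : DGMod R A)

/-- degree `-1` cycles in `Hom_A(Q,N)` -/
def Cyc := {l : GHneg Q N // l.isCycle}

instance : Add (Cyc N Q) :=
  ⟨fun x y => ⟨x.1 + y.1, GHneg.isCycle_add x.2 y.2⟩⟩

/-- `H_{−1}(Hom_A(Q,N))`: cycles modulo boundaries -/
def Hneg1 := Quot (fun x y : Cyc N Q => (x.1 - y.1).isBdry)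

/-- `YExt^1_A(Q,N)`: extensions modulo Yoneda equivalence -/
def YExt1 := Quot (fun e e' : DGExt Q N => e.Equiv' e')

/-!
STATEMENT 6. Let `Q` be a graded-projective DG `A`-module and `N` a DG `A`-module.  The
map `Ψ : YExt^1_A(Q,N) → H_{−1}(Hom_A(Q,N))`, sending the class of a (necessarily
graded-split) extension with differential `[[∂^N, λ],[0, ∂^Q]]` to the class of the cycle
`λ`, is a well-defined isomorphism of abelian groups, where `YExt^1` carries the Baer sum.
(The additivity is expressed on representatives: if `t` is a Baer sum of `e1` and `e2`,
then `Ψ[t] = Ψ[e1] + Ψ[e2]`.)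
-/

section MyHelpers
variable {R : Type} [CommRing R] {A : DGAlg R}

lemma Cx.cst_cst (M : Cx R) {i j k : ℤ} (h : i = j) (h' : j = k) (x : M.X i) :
    M.cst h' (M.cst h x) = M.cst (h.trans h') x := by subst h; subst h'; rfl

lemma Cx.cst_rfl (M : Cx R) {i : ℤ} (h : i = i) (x : M.X i) : M.cst h x = x := rfl

lemma Cx.cst_inj (M : Cx R) {i j : ℤ} (h : i = j) {x y : M.X i}
    (e : M.cst h x = M.cst h y) : x = y := by subst h; exact e

lemma Cx.cst_d (M : Cx R) {i j : ℤ} (h : i = j) (h' : i - 1 = j - 1) (x : M.X i) :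
    M.cst h' (M.d i x) = M.d j (M.cst h x) := by subst h; rfl

lemma DGMod.cst_smul (M : DGMod R A) {i j j' : ℤ} (h : j = j') (h' : i + j = i + j')
    (a : A.X i) (m : M.X j) :
    M.cst h' (M.smul a m) = M.smul a (M.cst h m) := by subst h; rfl

/-- naturality of any degree-indexed family of maps with respect to transport -/
lemma fam_cst {M N : Cx R} (g : ℤ → ℤ) (f : ∀ i, M.X i →ₗ[R] N.X (g i)) {i j : ℤ}
    (h : i = j) (h' : g i = g j) (x : M.X i) :
    f j (M.cst h x) = N.cst h' (f i x) := by subst h; rfl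

lemma DGMod.smul_neg' (M : DGMod R A) {i j : ℤ} (a : A.X i) (m : M.X j) :
    M.smul a (-m) = -M.smul a m := map_neg (M.smulL a) m

lemma DGMod.smul_sub' (M : DGMod R A) {i j : ℤ} (a : A.X i) (m m' : M.X j) :
    M.smul a (m - m') = M.smul a m - M.smul a m' := map_sub (M.smulL a) m m'

lemma DGMod.smul_zsmul' (M : DGMod R A) {i j : ℤ} (c : ℤ) (a : A.X i) (m : M.X j) :
    M.smul a (c • m) = c • M.smul a m := map_zsmul (M.smulL a) c m

namespace GHneg
variable {M N : DGMod R A}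

lemma add_f (l l' : GHneg M N) (i : ℤ) (m : M.X i) :
    (l + l').f i m = l.f i m + l'.f i m := rfl

lemma neg_f (l : GHneg M N) (i : ℤ) (m : M.X i) : (-l).f i m = -(l.f i m) := rfl

lemma sub_f (l l' : GHneg M N) (i : ℤ) (m : M.X i) :
    (l - l').f i m = l.f i m - l'.f i m := by
  show l.f i m + (-(l'.f i)) m = _
  simp [sub_eq_add_neg]

end GHneg

/-- identity morphism of DG modules -/
def DGHom.id (M : DGMod R A) : DGHom M M :=
  ⟨fun _ => LinearMap.id, fun _ _ => rfl, fun _ _ => rfl⟩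

namespace DGExt
variable {Q N : DGMod R A}

lemma Equiv'.refl (e : DGExt Q N) : e.Equiv' e :=
  ⟨DGHom.id e.E, fun _ => Function.bijective_id, fun _ _ => rfl, fun _ _ => rfl⟩

lemma Equiv'.symm {e e' : DGExt Q N} (h : e.Equiv' e') : e'.Equiv' e := by
  obtain ⟨φ, hbij, hι, hp⟩ := h
  let ψ : ∀ i, e'.E.X i →ₗ[R] e.E.X i :=
    fun i => (LinearEquiv.ofBijective (φ.f i) (hbij i)).symm.toLinearMap
  have hφψ : ∀ i y, φ.f i (ψ i y) = y := fun i y =>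
    (LinearEquiv.ofBijective (φ.f i) (hbij i)).apply_symm_apply y
  refine ⟨⟨ψ, ?_, ?_⟩, ?_, ?_, ?_⟩
  · intro i m
    apply (hbij (i - 1)).1
    rw [hφψ, φ.comm_d, hφψ]
  · intro i j a m
    apply (hbij (i + j)).1
    rw [hφψ, φ.comm_smul, hφψ]
  · exact fun i => (LinearEquiv.ofBijective (φ.f i) (hbij i)).symm.bijective
  · intro i x
    apply (hbij i).1
    rw [hφψ, hι]
  · intro i x
    rw [← hp i (ψ i x), hφψ]

lemma Equiv'.trans {e1 e2 e3 : DGExt Q N} (h : e1.Equiv' e2) (h' : e2.Equiv' e3) :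
    e1.Equiv' e3 := by
  obtain ⟨φ, hb, hι, hp⟩ := h; obtain ⟨φ', hb', hι', hp'⟩ := h'
  refine ⟨φ'.comp φ, fun i => (hb' i).comp (hb i), ?_, ?_⟩
  · intro i x
    show φ'.f i (φ.f i (e1.ι.f i x)) = _
    rw [hι, hι']
  · intro i x
    show e3.p.f i (φ'.f i (φ.f i x)) = _
    rw [hp', hp]

end DGExt
end MyHelpers
section MyHelpers2
variable {R : Type} [CommRing R] {A : DGAlg R} {N Q : DGMod R A}

lemma stdE_d (l : GHneg Q N) (hc : l.isCycle) (i : ℤ) (x : N.X i × Q.X i) :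
    (stdExt N Q l hc).E.d i x = (N.d i x.1 + l.f i x.2, Q.d i x.2) := rfl

lemma stdE_smul (l : GHneg Q N) (hc : l.isCycle) {i j : ℤ} (a : A.X i) (m : N.X j × Q.X j) :
    (stdExt N Q l hc).E.smul a m = (N.smul a m.1, Q.smul a m.2) := rfl

lemma stdExt_ι (l : GHneg Q N) (hc : l.isCycle) (i : ℤ) (n : N.X i) :
    (stdExt N Q l hc).ι.f i n = (n, (0 : Q.X i)) := rfl

lemma stdExt_p (l : GHneg Q N) (hc : l.isCycle) (i : ℤ) (x : N.X i × Q.X i) :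
    (stdExt N Q l hc).p.f i x = x.2 := rfl

/-- zero graded map of degree 0 -/
def GH0.zero' : GH0 Q N :=
  ⟨fun _ => 0, by intro i j a m; simp [DGMod.smul_zero']⟩

def GH0.add' (v w : GH0 Q N) : GH0 Q N :=
  ⟨fun i => v.f i + w.f i, by
    intro i j a m
    simp [v.comm_smul, w.comm_smul, N.smul_add]⟩

def GH0.neg' (v : GH0 Q N) : GH0 Q N :=
  ⟨fun i => -v.f i, by
    intro i j a m
    simp [v.comm_smul, N.smul_neg']⟩

lemma bdry_congr {l l' : GHneg Q N} (h : ∀ i m, l.f i m = l'.f i m) (hb : l.isBdry) :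
    l'.isBdry := by
  obtain ⟨v, hv⟩ := hb
  exact ⟨v, fun i m => by rw [← h i m]; exact hv i m⟩

lemma bdry_of_zero {l : GHneg Q N} (h : ∀ i m, l.f i m = 0) : l.isBdry :=
  ⟨GH0.zero', fun i m => by rw [h i m]; simp [GH0.zero']⟩

lemma bdry_add {l l' : GHneg Q N} (h : l.isBdry) (h' : l'.isBdry) : (l + l').isBdry := by
  obtain ⟨v, hv⟩ := h; obtain ⟨w, hw⟩ := h'
  refine ⟨v.add' w, fun i m => ?_⟩
  rw [GHneg.add_f, hv, hw]
  show _ = N.d i (v.f i m + w.f i m) - (v.f (i-1) (Q.d i m) + w.f (i-1) (Q.d i m))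
  rw [map_add]
  abel

lemma bdry_neg {l : GHneg Q N} (h : l.isBdry) : (-l).isBdry := by
  obtain ⟨v, hv⟩ := h
  refine ⟨v.neg', fun i m => ?_⟩
  rw [GHneg.neg_f, hv]
  show _ = N.d i (-v.f i m) - (-v.f (i-1) (Q.d i m))
  rw [map_neg]
  abel

lemma bdry_refl (l : GHneg Q N) : (l - l).isBdry :=
  bdry_of_zero (fun i m => by rw [GHneg.sub_f, sub_self])

lemma bdry_symm {l l' : GHneg Q N} (h : (l - l').isBdry) : (l' - l).isBdry :=
  bdry_congr (fun i m => by rw [GHneg.neg_f, GHneg.sub_f, GHneg.sub_f, neg_sub]) (bdry_neg h)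

lemma bdry_trans {l l' l'' : GHneg Q N} (h : (l - l').isBdry) (h' : (l' - l'').isBdry) :
    (l - l'').isBdry :=
  bdry_congr (fun i m => by
    rw [GHneg.add_f, GHneg.sub_f, GHneg.sub_f, GHneg.sub_f]; abel) (bdry_add h h')

/-- If two standard extensions are equivalent, the cycles differ by a boundary. -/
lemma bdry_of_equiv {l l' : GHneg Q N} {hc : l.isCycle} {hc' : l'.isCycle}
    (h : (stdExt N Q l hc).Equiv' (stdExt N Q l' hc')) : (l - l').isBdry := by
  obtain ⟨φ, hb, hι, hp⟩ := h
  have hsnd : ∀ (i : ℤ) (x : N.X i × Q.X i), (φ.f i x).2 = x.2 := fun i x => hp i x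
  have hφadd : ∀ (k : ℤ) (n : N.X k) (q' : Q.X k),
      (φ.f k (n, q')).1 = n + (φ.f k (0, q')).1 := by
    intro k n q'
    have he : ((n, q') : N.X k × Q.X k) = ((n, (0:Q.X k)) : N.X k × Q.X k) + (0, q') := by
      simp
    erw [he, map_add]
    have h3 : φ.f k ((n : N.X k), (0:Q.X k)) = (n, 0) := hι k n
    rw [h3]
    rfl
  refine ⟨⟨fun i => (LinearMap.fst R (N.X i) (Q.X i)).comp
      ((φ.f i).comp (LinearMap.inr R (N.X i) (Q.X i))), ?_⟩, ?_⟩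
  · intro i j a q
    show (φ.f (i+j) (0, Q.smul a q)).1 = N.smul a (φ.f j (0, q)).1
    have h1 : ((0 : N.X (i+j)), Q.smul a q) = (stdExt N Q l hc).E.smul a (0, q) := by
      rw [stdE_smul]
      simp [N.smul_zero']
    have h2 := φ.comm_smul a ((0 : N.X j), q)
    erw [h1, h2, stdE_smul]
  · intro i q
    show (l - l').f i q = N.d i (φ.f i (0, q)).1 - (φ.f (i-1) (0, Q.d i q)).1
    have hd := φ.comm_d i ((0 : N.X i), q)
    erw [stdE_d, stdE_d] at hd
    simp only [map_zero, zero_add] at hd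
    rw [hsnd i ((0 : N.X i), q)] at hd
    have h1 : (φ.f (i-1) (l.f i q, Q.d i q)).1 = N.d i (φ.f i (0, q)).1 + l'.f i q :=
      congrArg Prod.fst hd
    rw [hφadd (i-1) (l.f i q) (Q.d i q)] at h1
    rw [GHneg.sub_f, sub_eq_sub_iff_add_eq_add]
    exact h1

/-- two standard extensions whose cycles differ by a boundary are equivalent -/
lemma equiv_of_bdry {l l' : GHneg Q N} (hc : l.isCycle) (hc' : l'.isCycle)
    (h : (l - l').isBdry) : (stdExt N Q l hc).Equiv' (stdExt N Q l' hc') := by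
  obtain ⟨v, hv⟩ := h
  have hv' : ∀ i m, l.f i m - l'.f i m = N.d i (v.f i m) - v.f (i-1) (Q.d i m) :=
    fun i m => by rw [← GHneg.sub_f]; exact hv i m
  refine ⟨⟨fun i => LinearMap.prod
      ((LinearMap.fst R (N.X i) (Q.X i)) + (v.f i).comp (LinearMap.snd R (N.X i) (Q.X i)))
      (LinearMap.snd R (N.X i) (Q.X i)), ?_, ?_⟩, ?_, ?_, ?_⟩
  · intro i m
    show ((N.d i m.1 + l.f i m.2) + v.f (i-1) (Q.d i m.2), Q.d i m.2) =
      (stdExt N Q l' hc').E.d i (m.1 + v.f i m.2, m.2)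
    rw [stdE_d]
    refine Prod.ext ?_ rfl
    show N.d i m.1 + l.f i m.2 + v.f (i-1) (Q.d i m.2) =
      N.d i (m.1 + v.f i m.2) + l'.f i m.2
    rw [map_add]
    have h2 := hv' i m.2
    rw [sub_eq_sub_iff_add_eq_add] at h2
    rw [add_assoc, h2]
    abel
  · intro i j a m
    show (N.smul a m.1 + v.f (i+j) (Q.smul a m.2), Q.smul a m.2) =
      (stdExt N Q l' hc').E.smul a (m.1 + v.f j m.2, m.2)
    rw [stdE_smul]
    refine Prod.ext ?_ rfl
    show N.smul a m.1 + v.f (i+j) (Q.smul a m.2) = N.smul a (m.1 + v.f j m.2)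
    rw [v.comm_smul, N.smul_add]
  · intro i
    constructor
    · intro x y hxy
      have h2a := congrArg Prod.snd hxy
      have h1a := congrArg Prod.fst hxy
      have h2 : x.2 = y.2 := h2a
      have h1 : x.1 + v.f i x.2 = y.1 + v.f i y.2 := h1a
      rw [h2] at h1
      exact Prod.ext (add_right_cancel h1) h2
    · intro y
      refine ⟨(y.1 - v.f i y.2, y.2), ?_⟩
      show (y.1 - v.f i y.2 + v.f i y.2, y.2) = y
      refine Prod.ext ?_ rfl
      simp
  · intro i x
    show ((x + v.f i 0, (0 : Q.X i)) : N.X i × Q.X i) = (stdExt N Q l' hc').ι.f i x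
    rw [stdExt_ι]
    simp
  · intro i x
    rfl
end MyHelpers2
section MyHelpers3
variable {R : Type} [CommRing R] {A : DGAlg R} {N Q : DGMod R A}

/-- lift a map through an injective map with compatible ranges -/
noncomputable def liftLM {M₁ M₂ M₃ : Type} [AddCommGroup M₁] [AddCommGroup M₂]
    [AddCommGroup M₃] [Module R M₁] [Module R M₂] [Module R M₃]
    (f : M₁ →ₗ[R] M₂) (g : M₃ →ₗ[R] M₂) (hf : Injective f) (h : ∀ x, ∃ y, f y = g x) :
    M₃ →ₗ[R] M₁ where
  toFun x := Classical.choose (h x)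
  map_add' x y := hf (by
    rw [Classical.choose_spec (h (x + y)), map_add f, Classical.choose_spec (h x),
      Classical.choose_spec (h y), map_add g])
  map_smul' r x := hf (by
    rw [Classical.choose_spec (h (r • x)), RingHom.id_apply, map_smul f,
      Classical.choose_spec (h x), map_smul g])

lemma liftLM_spec {M₁ M₂ M₃ : Type} [AddCommGroup M₁] [AddCommGroup M₂]
    [AddCommGroup M₃] [Module R M₁] [Module R M₂] [Module R M₃]
    (f : M₁ →ₗ[R] M₂) (g : M₃ →ₗ[R] M₂) (hf : Injective f) (h : ∀ x, ∃ y, f y = g x)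
    (x : M₃) : f (liftLM f g hf h x) = g x := Classical.choose_spec (h x)

/-- a degree-0 `A`-linear splitting of the projection of an extension -/
structure SplitData (e : DGExt Q N) where
  s : ∀ i, Q.X i →ₗ[R] e.E.X i
  hp : ∀ i q, e.p.f i (s i q) = q
  hsm : ∀ {i j : ℤ} (a : A.X i) (q : Q.X j), s (i + j) (Q.smul a q) = e.E.smul a (s j q)

/-- the identity, as a degree-0 element of the Hom complex -/
def idG (Q : DGMod R A) : GHn Q Q 0 where
  f i := Q.cst (by omega)
  comm_smul := by
    intro i j a m
    simp only [mul_zero, Int.negOnePow_zero, Units.val_one, one_smul]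
    rw [← DGMod.cst_smul Q (show j = j + 0 by omega) (show i + j = i + (j + 0) by omega) a m,
      Cx.cst_cst]

noncomputable def getSplit (hQ : GradedProjective Q) (e : DGExt Q N) : SplitData e := by
  have hk := Classical.choose_spec (hQ e.E Q e.p e.surj 0 (idG Q))
  set k := Classical.choose (hQ e.E Q e.p e.surj 0 (idG Q)) with hkdef
  refine ⟨fun i => (e.E.cst (show i + 0 = i by omega)).comp (k.f i), ?_, ?_⟩
  · intro i q
    show e.p.f i (e.E.cst (show i + 0 = i by omega) (k.f i q)) = q
    rw [DGHom.f_cst e.p (show i + 0 = i by omega), hk i q]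
    show Q.cst (show i + 0 = i by omega) (Q.cst (show i = i + 0 by omega) q) = q
    rw [Cx.cst_cst]
    rfl
  · intro i j a q
    show e.E.cst (show i + j + 0 = i + j by omega) (k.f (i + j) (Q.smul a q)) =
      e.E.smul a (e.E.cst (show j + 0 = j by omega) (k.f j q))
    rw [k.comm_smul a q]
    simp only [mul_zero, Int.negOnePow_zero, Units.val_one, one_smul]
    rw [Cx.cst_cst,
      ← DGMod.cst_smul e.E (show j + 0 = j by omega) (show i + (j + 0) = i + j by omega)]

variable (e : DGExt Q N) (sd : SplitData e)

lemma splitW_mem (i : ℤ) (q : Q.X i) :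
    ∃ y, e.ι.f (i - 1) y = e.E.d i (sd.s i q) - sd.s (i - 1) (Q.d i q) := by
  have hker : e.E.d i (sd.s i q) - sd.s (i - 1) (Q.d i q) ∈ LinearMap.ker (e.p.f (i - 1)) := by
    rw [LinearMap.mem_ker, map_sub, e.p.comm_d i (sd.s i q), sd.hp, sd.hp, sub_self]
  rw [← e.exact (i - 1)] at hker
  exact hker

/-- the connecting cycle of a graded-split extension -/
noncomputable def splitLf : ∀ i, Q.X i →ₗ[R] N.X (i - 1) :=
  fun i => liftLM (e.ι.f (i - 1))
    ((e.E.d i).comp (sd.s i) - (sd.s (i - 1)).comp (Q.d i)) (e.inj (i - 1))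
    (fun q => splitW_mem e sd i q)

lemma splitLf_spec (i : ℤ) (q : Q.X i) :
    e.ι.f (i - 1) (splitLf e sd i q) = e.E.d i (sd.s i q) - sd.s (i - 1) (Q.d i q) :=
  liftLM_spec _ _ _ _ q

lemma p_ι_zero (i : ℤ) (n : N.X i) : e.p.f i (e.ι.f i n) = 0 := by
  have : e.ι.f i n ∈ LinearMap.ker (e.p.f i) := by
    rw [← e.exact i]; exact ⟨n, rfl⟩
  exact this

noncomputable def splitCycle : GHneg Q N where
  f := splitLf e sd
  comm_smul := by
    intro i j a q
    apply e.inj (i + j - 1)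
    rw [splitLf_spec]
    -- right hand side
    rw [map_zsmul, DGHom.f_cst e.ι (show i + (j - 1) = i + j - 1 by omega),
      e.ι.comm_smul a (splitLf e sd j q), splitLf_spec]
    -- left hand side
    rw [sd.hsm a q, e.E.leibniz a (sd.s j q), Q.leibniz a q, map_add,
      map_zsmul (sd.s (i + j - 1)),
      fam_cst (fun t => t) sd.s (show (i - 1) + j = i + j - 1 by omega)
        (show (i - 1) + j = i + j - 1 by omega) (Q.smul (A.d i a) q),
      fam_cst (fun t => t) sd.s (show i + (j - 1) = i + j - 1 by omega)
        (show i + (j - 1) = i + j - 1 by omega) (Q.smul a (Q.d j q)),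
      sd.hsm (A.d i a) q, sd.hsm a (Q.d j q)]
    rw [e.E.smul_sub', map_sub, smul_sub]
    abel

lemma splitCycle_isCycle : (splitCycle e sd).isCycle := by
  intro i q
  apply e.inj (i - 1 - 1)
  rw [map_add, map_zero]
  show e.ι.f (i - 1 - 1) (N.d (i - 1) (splitLf e sd i q)) +
    e.ι.f (i - 1 - 1) (splitLf e sd (i - 1) (Q.d i q)) = 0
  rw [e.ι.comm_d (i - 1) (splitLf e sd i q), splitLf_spec, splitLf_spec, map_sub,
    e.E.d_sq, Q.d_sq, map_zero, zero_sub, sub_zero]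
  abel

lemma equiv_std : (stdExt N Q (splitCycle e sd) (splitCycle_isCycle e sd)).Equiv' e := by
  refine ⟨⟨fun i => (e.ι.f i).comp (LinearMap.fst R (N.X i) (Q.X i)) +
      (sd.s i).comp (LinearMap.snd R (N.X i) (Q.X i)), ?_, ?_⟩, ?_, ?_, ?_⟩
  · intro i m
    show e.ι.f (i - 1) (N.d i m.1 + splitLf e sd i m.2) + sd.s (i - 1) (Q.d i m.2) =
      e.E.d i (e.ι.f i m.1 + sd.s i m.2)
    rw [map_add, splitLf_spec, e.ι.comm_d i m.1, map_add]
    abel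
  · intro i j a m
    show e.ι.f (i + j) (N.smul a m.1) + sd.s (i + j) (Q.smul a m.2) =
      e.E.smul a (e.ι.f j m.1 + sd.s j m.2)
    rw [e.ι.comm_smul, sd.hsm, e.E.smul_add]
  · intro i
    constructor
    · intro x y hxy
      have hxy' : e.ι.f i x.1 + sd.s i x.2 = e.ι.f i y.1 + sd.s i y.2 := hxy
      have h2 : x.2 = y.2 := by
        have := congrArg (e.p.f i) hxy'
        rwa [map_add, map_add, p_ι_zero, p_ι_zero, zero_add, zero_add, sd.hp, sd.hp] at this
      rw [h2] at hxy'
      have h1 : x.1 = y.1 := e.inj i (add_right_cancel hxy')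
      exact Prod.ext h1 h2
    · intro x
      have hker : x - sd.s i (e.p.f i x) ∈ LinearMap.ker (e.p.f i) := by
        rw [LinearMap.mem_ker, map_sub, sd.hp, sub_self]
      rw [← e.exact i] at hker
      obtain ⟨n, hn⟩ := hker
      refine ⟨(n, e.p.f i x), ?_⟩
      show e.ι.f i n + sd.s i (e.p.f i x) = x
      rw [hn]
      abel
  · intro i x
    show e.ι.f i x + sd.s i 0 = e.ι.f i x
    rw [map_zero, add_zero]
  · intro i x
    show e.p.f i (e.ι.f i x.1 + sd.s i x.2) = x.2
    rw [map_add, p_ι_zero, zero_add, sd.hp]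

end MyHelpers3
section MyHelpers4
variable {R : Type} [CommRing R] {A : DGAlg R} {N Q : DGMod R A}

lemma baer_equiv {e1 e2 t : DGExt Q N} (hB : IsBaerSum e1 e2 t)
    {l1 l2 : GHneg Q N} {h1 : l1.isCycle} {h2 : l2.isCycle}
    (hq1 : (stdExt N Q l1 h1).Equiv' e1) (hq2 : (stdExt N Q l2 h2).Equiv' e2) :
    (stdExt N Q (l1 + l2) (GHneg.isCycle_add h1 h2)).Equiv' t := by
  set hc12 := GHneg.isCycle_add h1 h2 with hc12def
  obtain ⟨P, p1, p2, γ, τ, hpb, hinj, hpull, hγ1, hγ2, hτsurj, hτker, hτι, hτp⟩ := hB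
  obtain ⟨φ1, hb1, hι1, hp1⟩ := hq1
  obtain ⟨φ2, hb2, hι2, hp2⟩ := hq2
  have hι1' : ∀ (i : ℤ) (n : N.X i), φ1.f i ((n, (0 : Q.X i))) = e1.ι.f i n :=
    fun i n => hι1 i n
  have hι2' : ∀ (i : ℤ) (n : N.X i), φ2.f i ((n, (0 : Q.X i))) = e2.ι.f i n :=
    fun i n => hι2 i n
  have hPinj : ∀ (i : ℤ) (x y : P.X i),
      p1.f i x = p1.f i y → p2.f i x = p2.f i y → x = y := by
    intro i x y hx hy
    exact hinj i (show (p1.f i x, p2.f i x) = (p1.f i y, p2.f i y) by rw [hx, hy])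
  have hkerτ : ∀ (i : ℤ) (n : N.X i), τ.f i (γ.f i n) = 0 := by
    intro i n
    have : γ.f i n ∈ LinearMap.ker (τ.f i) := by rw [← hτker i]; exact ⟨n, rfl⟩
    exact this
  have hex : ∀ (i : ℤ) (u : N.X i × Q.X i),
      ∃ y : P.X i, ((p1.f i).prod (p2.f i)) y
        = (φ1.f i u, φ2.f i ((0 : N.X i), u.2)) := by
    intro i u
    obtain ⟨y, hy1, hy2⟩ := hpull i (φ1.f i u) (φ2.f i ((0 : N.X i), u.2))
      (by rw [hp1 i u, hp2 i ((0 : N.X i), u.2)]; rfl)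
    exact ⟨y, show (p1.f i y, p2.f i y) = _ by rw [hy1, hy2]⟩
  let χ : ∀ i, (N.X i × Q.X i) →ₗ[R] P.X i := fun i =>
    liftLM ((p1.f i).prod (p2.f i))
      (LinearMap.prod (φ1.f i) ((φ2.f i).comp ((LinearMap.inr R (N.X i) (Q.X i)).comp
        (LinearMap.snd R (N.X i) (Q.X i)))))
      (fun x y hxy => hinj i hxy)
      (fun u => hex i u)
  have hχ1 : ∀ (i : ℤ) (u : N.X i × Q.X i), p1.f i (χ i u) = φ1.f i u := by
    intro i u
    exact congrArg Prod.fst (liftLM_spec ((p1.f i).prod (p2.f i)) _ _ _ u)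
  have hχ2 : ∀ (i : ℤ) (u : N.X i × Q.X i),
      p2.f i (χ i u) = φ2.f i ((0 : N.X i), u.2) := by
    intro i u
    exact congrArg Prod.snd (liftLM_spec ((p1.f i).prod (p2.f i)) _ _ _ u)
  refine ⟨⟨fun i => (τ.f i).comp (χ i), ?_, ?_⟩, ?_, ?_, ?_⟩
  · -- comm_d
    intro i u
    show τ.f (i-1) (χ (i-1) ((stdExt N Q (l1 + l2) hc12).E.d i u)) = t.E.d i (τ.f i (χ i u))
    erw [← τ.comm_d i (χ i u), stdE_d]
    have hδ : χ (i-1) (N.d i u.1 + (l1 + l2).f i u.2, Q.d i u.2)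
        = P.d i (χ i u) + γ.f (i-1) (-(l2.f i u.2)) := by
      apply hPinj
      · erw [map_add, hχ1, p1.comm_d i (χ i u), hχ1, hγ1, ← φ1.comm_d i u, map_neg, neg_neg,
          ← hι1 (i-1) (l2.f i u.2), ← map_add]
        congr 1
        erw [stdE_d, stdExt_ι, GHneg.add_f]
        refine Prod.ext ?_ ?_
        · show N.d i u.1 + (l1.f i u.2 + l2.f i u.2) = (N.d i u.1 + l1.f i u.2) + l2.f i u.2
          abel
        · show Q.d i u.2 = Q.d i u.2 + 0
          rw [add_zero]
      · erw [map_add, hχ2, p2.comm_d i (χ i u), hχ2, hγ2, ← φ2.comm_d i ((0 : N.X i), u.2),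
          ← hι2 (i-1) (-(l2.f i u.2)), ← map_add]
        congr 1
        rw [stdE_d, stdExt_ι]
        refine Prod.ext ?_ ?_
        · show (0 : N.X (i-1)) = (N.d i 0 + l2.f i u.2) + -(l2.f i u.2)
          rw [map_zero, zero_add, add_neg_cancel]
        · show Q.d i u.2 = Q.d i u.2 + 0
          rw [add_zero]
    rw [hδ, map_add, hkerτ, add_zero]
  · -- comm_smul
    intro i j a u
    show τ.f (i+j) (χ (i+j) ((stdExt N Q (l1 + l2) hc12).E.smul a u)) =
      t.E.smul a (τ.f j (χ j u))
    erw [← τ.comm_smul a (χ j u), stdE_smul]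
    congr 1
    apply hPinj
    · erw [hχ1, p1.comm_smul a (χ j u), hχ1, ← φ1.comm_smul a u, stdE_smul]
    · erw [hχ2, p2.comm_smul a (χ j u), hχ2, ← φ2.comm_smul a ((0 : N.X j), u.2), stdE_smul]
      congr 1
      refine Prod.ext ?_ rfl
      show (0 : N.X (i+j)) = N.smul a 0
      rw [N.smul_zero']
  · -- bijective
    intro i
    constructor
    · intro x y hxy
      have hxy' : τ.f i (χ i x) = τ.f i (χ i y) := hxy
      have hker : χ i x - χ i y ∈ LinearMap.ker (τ.f i) := by
        rw [LinearMap.mem_ker, map_sub, hxy', sub_self]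
      rw [← hτker i] at hker
      obtain ⟨m, hm⟩ := hker
      have hP1 : φ1.f i (x - y) = φ1.f i ((-m, (0 : Q.X i))) := by
        erw [map_sub, ← hχ1 i x, ← hχ1 i y, ← map_sub, ← hm, hγ1]
        have : φ1.f i ((-m, (0 : Q.X i))) = -φ1.f i ((m, (0 : Q.X i))) := by
          erw [← map_neg]
          congr 1
          refine Prod.ext rfl ?_
          show (0 : Q.X i) = -0
          rw [neg_zero]
        rw [this, hι1' i m]
      have hxy2 : x - y = (-m, (0 : Q.X i)) := (hb1 i).1 hP1
      have hsnd : x.2 = y.2 := by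
        have := congrArg Prod.snd hxy2
        simp only [Prod.snd_sub] at this
        exact sub_eq_zero.mp this
      have hm0 : m = 0 := by
        apply e2.inj i
        rw [map_zero]
        have hh := hγ2 i m
        rw [hm, map_sub, hχ2 i x, hχ2 i y, hsnd, sub_self] at hh
        exact hh.symm
      rw [hm0] at hxy2
      have : x - y = 0 := by
        rw [hxy2]
        exact Prod.ext neg_zero rfl
      exact sub_eq_zero.mp this
    · intro z
      obtain ⟨w, hw⟩ := hτsurj i z
      obtain ⟨u1, hu1⟩ := (hb1 i).2 (p1.f i w)
      obtain ⟨u2, hu2⟩ := (hb2 i).2 (p2.f i w)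
      have hq : u2.2 = u1.2 := by
        have a1 : e1.p.f i (p1.f i w) = u1.2 := by rw [← hu1, hp1 i u1]; rfl
        have a2 : e2.p.f i (p2.f i w) = u2.2 := by rw [← hu2, hp2 i u2]; rfl
        rw [← a2, ← hpb i w, a1]
      refine ⟨(u1.1 + u2.1, u1.2), ?_⟩
      show τ.f i (χ i (u1.1 + u2.1, u1.2)) = z
      have hdiff : w = χ i (u1.1 + u2.1, u1.2) + γ.f i u2.1 := by
        apply hPinj
        · erw [map_add, hχ1, hγ1, ← hu1, ← hι1' i u2.1, ← map_neg (φ1.f i), ← map_add]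
          congr 1
          refine Prod.ext ?_ ?_
          · show u1.1 = (u1.1 + u2.1) + -u2.1
            abel
          · show u1.2 = u1.2 + -0
            rw [neg_zero, add_zero]
        · erw [map_add, hχ2, hγ2, ← hu2, ← hι2' i u2.1, ← map_add]
          congr 1
          refine Prod.ext ?_ ?_
          · show u2.1 = 0 + u2.1
            rw [zero_add]
          · show u2.2 = u1.2 + 0
            rw [add_zero, hq]
      rw [← hw, hdiff, map_add, hkerτ, add_zero]
  · -- ι compat
    intro i n
    show τ.f i (χ i ((n, (0 : Q.X i)))) = t.ι.f i n
    apply hτι i n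
    · rw [hχ1]
      exact hι1' i n
    · rw [hχ2]
      show φ2.f i ((0 : N.X i), (0 : Q.X i)) = 0
      have hz : ((0 : N.X i), (0 : Q.X i)) = (0 : N.X i × Q.X i) := rfl
      erw [hz, map_zero]
  · -- p compat
    intro i u
    show t.p.f i (τ.f i (χ i u)) = u.2
    erw [hτp i (χ i u), hχ1, hp1 i u]
    rfl
end MyHelpers4
section MyHelpers5
variable {R : Type} [CommRing R] {A : DGAlg R} (N Q : DGMod R A)

/-- the cycle attached to an extension via a chosen graded splitting -/
noncomputable def toCycD (hQ : GradedProjective Q) (e : DGExt Q N) : Cyc N Q :=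
  ⟨splitCycle e (getSplit hQ e), splitCycle_isCycle e (getSplit hQ e)⟩

lemma toCycD_equiv (hQ : GradedProjective Q) (e : DGExt Q N) :
    (stdExt N Q (toCycD N Q hQ e).1 (toCycD N Q hQ e).2).Equiv' e :=
  equiv_std e (getSplit hQ e)

lemma hneg1_sound {x y : Cyc N Q}
    (h : (Quot.mk (fun x y : Cyc N Q => (x.1 - y.1).isBdry) x)
       = Quot.mk (fun x y : Cyc N Q => (x.1 - y.1).isBdry) y) :
    (x.1 - y.1).isBdry := by
  have hresp : ∀ a b : Cyc N Q, (a.1 - b.1).isBdry →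
      ((x.1 - a.1).isBdry = (x.1 - b.1).isBdry) := by
    intro a b hab
    apply propext
    exact ⟨fun h' => bdry_trans h' hab, fun h' => bdry_trans h' (bdry_symm hab)⟩
  have hc := congrArg (Quot.lift (fun c : Cyc N Q => (x.1 - c.1).isBdry) hresp) h
  exact hc.mp (bdry_refl x.1)

end MyHelpers5
theorem psi_well_defined_isomorphism (hQ : GradedProjective Q) :
    ∃ e : YExt1 N Q ≃ Hneg1 N Q,
      (∀ (l : GHneg Q N) (hc : l.isCycle),
        e (Quot.mk _ (stdExt N Q l hc)) = Quot.mk _ (⟨l, hc⟩ : Cyc N Q)) ∧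
      (∀ e1 e2 t : DGExt Q N, IsBaerSum e1 e2 t →
        ∀ x y : Cyc N Q, e (Quot.mk _ e1) = Quot.mk _ x → e (Quot.mk _ e2) = Quot.mk _ y →
          e (Quot.mk _ t) = Quot.mk _ (x + y)) := by
  classical
  have hF : ∀ e e' : DGExt Q N, e.Equiv' e' →
      (Quot.mk (fun x y : Cyc N Q => (x.1 - y.1).isBdry) (toCycD N Q hQ e))
        = Quot.mk _ (toCycD N Q hQ e') := by
    intro e e' h
    exact Quot.sound (bdry_of_equiv (DGExt.Equiv'.trans (toCycD_equiv N Q hQ e)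
      (DGExt.Equiv'.trans h (DGExt.Equiv'.symm (toCycD_equiv N Q hQ e')))))
  have hG : ∀ x y : Cyc N Q, (x.1 - y.1).isBdry →
      (Quot.mk (fun e e' : DGExt Q N => e.Equiv' e') (stdExt N Q x.1 x.2))
        = Quot.mk _ (stdExt N Q y.1 y.2) :=
    fun x y h => Quot.sound (equiv_of_bdry x.2 y.2 h)
  have key : ∀ (l : GHneg Q N) (hc : l.isCycle),
      ((toCycD N Q hQ (stdExt N Q l hc)).1 - l).isBdry := by
    intro l hc
    exact bdry_of_equiv (toCycD_equiv N Q hQ (stdExt N Q l hc))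
  refine ⟨⟨Quot.lift (fun e => Quot.mk _ (toCycD N Q hQ e)) hF,
    Quot.lift (fun c : Cyc N Q => Quot.mk _ (stdExt N Q c.1 c.2)) hG, ?_, ?_⟩, ?_, ?_⟩
  · intro x
    induction x using Quot.ind with
    | _ e => exact Quot.sound (toCycD_equiv N Q hQ e)
  · intro y
    induction y using Quot.ind with
    | _ c => exact Quot.sound (key c.1 c.2)
  · intro l hc
    exact Quot.sound (key l hc)
  · intro e1 e2 t hB x y hx hy
    have hx' : ((toCycD N Q hQ e1).1 - x.1).isBdry := hneg1_sound N Q hx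
    have hy' : ((toCycD N Q hQ e2).1 - y.1).isBdry := hneg1_sound N Q hy
    have ht : (stdExt N Q ((toCycD N Q hQ e1).1 + (toCycD N Q hQ e2).1)
        (GHneg.isCycle_add (toCycD N Q hQ e1).2 (toCycD N Q hQ e2).2)).Equiv' t :=
      baer_equiv hB (toCycD_equiv N Q hQ e1) (toCycD_equiv N Q hQ e2)
    have ht2 : ((toCycD N Q hQ t).1 -
        ((toCycD N Q hQ e1).1 + (toCycD N Q hQ e2).1)).isBdry :=
      bdry_of_equiv (DGExt.Equiv'.trans (toCycD_equiv N Q hQ t) (DGExt.Equiv'.symm ht))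
    have hcomb := bdry_add ht2 (bdry_add hx' hy')
    refine Quot.sound (bdry_congr (fun i m => ?_) hcomb)
    have hxy1 : (x + y).1 = x.1 + y.1 := rfl
    simp only [GHneg.add_f, GHneg.sub_f, hxy1]
    abel

end Statement6
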